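/- For every positive integer k, the tree T_k on 9k+1 vertices obtained by taking k disjoint copies of the path P₉ and joining the central vertex of each copy to one new vertex v has at least 13^k 4-matchings. Consequently the maximum number of 4-matchings over trees of order n is at least Ω(13^{n/9}). -/

import Mathlib

/-- distance between two edges of a graph: the minimum graph distance between an
endpoint of one and an endpoint of the other. -/
noncomputable def edgeDist {V : Type*} (G : SimpleGraph V) (e f : Sym2 V) : ℕ :=
  sInf {d : ℕ | ∃ u ∈ e, ∃ v ∈ f, d = G.dist u v}

/-- an `r`-matching: a set of edges of `G`, any two distinct ones at distance at
least `r`. -/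
def IsRMatching {V : Type*} (G : SimpleGraph V) (r : ℕ) (M : Set (Sym2 V)) : Prop :=
  M ⊆ G.edgeSet ∧ ∀ e ∈ M, ∀ f ∈ M, e ≠ f → r ≤ edgeDist G e f

/-- the tree obtained from `k` disjoint copies of the path `P₉` by joining the central
vertex of each copy to one new vertex (the vertex `none`). -/
def treeP9 (k : ℕ) : SimpleGraph (Option (Fin k × Fin 9)) :=
  SimpleGraph.fromRel (fun x y =>
    (∃ (i : Fin k) (a : Fin 8), x = some (i, a.castSucc) ∧ y = some (i, a.succ)) ∨
    (x = none ∧ ∃ i : Fin k, y = some (i, 4)))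

open SimpleGraph

lemma phi_walk {V : Type*} {G : SimpleGraph V} (φ : V → ℤ)
    (hφ : ∀ a b, G.Adj a b → |φ a - φ b| ≤ 1) {u v : V} (p : G.Walk u v) :
    |φ u - φ v| ≤ (p.length : ℤ) := by
  induction p with
  | nil => simp
  | cons h q ih =>
    rename_i x y z
    have h1 := hφ x y h
    have h2 := abs_sub_le (φ x) (φ y) (φ z)
    simp only [Walk.length_cons]
    push_cast
    linarith
lemma phi_dist {V : Type*} {G : SimpleGraph V} (φ : V → ℤ)
    (hφ : ∀ a b, G.Adj a b → |φ a - φ b| ≤ 1) {u v : V} (hr : G.Reachable u v) :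
    |φ u - φ v| ≤ (G.dist u v : ℤ) := by
  obtain ⟨p, hp⟩ := hr.exists_walk_length_eq_dist
  rw [← hp]
  exact phi_walk φ hφ p

lemma edgeDist_ge {V : Type*} (G : SimpleGraph V) (e f : Sym2 V) (r : ℕ)
    (h : ∀ u ∈ e, ∀ v ∈ f, r ≤ G.dist u v) : r ≤ edgeDist G e f := by
  have hne : {d : ℕ | ∃ u ∈ e, ∃ v ∈ f, d = G.dist u v}.Nonempty := by
    induction e using Sym2.ind with | _ x y =>
    induction f using Sym2.ind with | _ z w =>
    exact ⟨G.dist x z, x, by simp, z, by simp, rfl⟩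
  obtain ⟨u, hu, v, hv, hd⟩ := Nat.sInf_mem hne
  rw [edgeDist, hd]
  exact h u hu v hv

lemma edgeDist_comm {V : Type*} (G : SimpleGraph V) (e f : Sym2 V) :
    edgeDist G e f = edgeDist G f e := by
  unfold edgeDist
  congr 1
  ext d
  constructor <;> rintro ⟨u, hu, v, hv, rfl⟩ <;> exact ⟨v, hv, u, hu, by rw [SimpleGraph.dist_comm]⟩

def choices : Fin 13 → Finset (Fin 8) :=
  ![∅, {0}, {1}, {2}, {5}, {6}, {7}, {0,5}, {0,6}, {0,7}, {1,6}, {1,7}, {2,7}]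

lemma choices_inj : Function.Injective choices := by decide

lemma choices_allowed : ∀ c, ∀ a ∈ choices c, a.val ≤ 2 ∨ 5 ≤ a.val := by decide

lemma choices_far : ∀ c, ∀ a ∈ choices c, ∀ b ∈ choices c, a ≠ b →
    a.val + 5 ≤ b.val ∨ b.val + 5 ≤ a.val := by decide

lemma count_ge {W : Type*} [Finite W] (G : SimpleGraph W) (k : ℕ)
    (ve : Fin k × Fin 9 → W) (hve : Function.Injective ve)
    (hedge : ∀ (i : Fin k) (a : Fin 8), G.Adj (ve (i, a.castSucc)) (ve (i, a.succ)))
    (h1 : ∀ (i : Fin k) (a b : Fin 8), a.val + 5 ≤ b.val →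
      4 ≤ edgeDist G s(ve (i, a.castSucc), ve (i, a.succ)) s(ve (i, b.castSucc), ve (i, b.succ)))
    (h2 : ∀ (i j : Fin k) (a b : Fin 8), i ≠ j → (a.val ≤ 2 ∨ 5 ≤ a.val) →
      (b.val ≤ 2 ∨ 5 ≤ b.val) →
      4 ≤ edgeDist G s(ve (i, a.castSucc), ve (i, a.succ)) s(ve (j, b.castSucc), ve (j, b.succ))) :
    13 ^ k ≤ Nat.card {M : Set (Sym2 W) // IsRMatching G 4 M} := by
  classical
  set pe : Fin k → Fin 8 → Sym2 W := fun i a => s(ve (i, a.castSucc), ve (i, a.succ)) with hpe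
  have pe_inj : ∀ i j a b, pe i a = pe j b → i = j ∧ a = b := by
    intro i j a b h
    rw [hpe, Sym2.eq_iff] at h
    rcases h with ⟨e1, e2⟩ | ⟨e1, e2⟩
    · have p1 := hve e1
      have : i = j ∧ a.castSucc = b.castSucc := by
        rw [Prod.mk.injEq] at p1; exact p1
      exact ⟨this.1, Fin.castSucc_injective _ this.2⟩
    · have p1 := hve e1
      have p2 := hve e2
      rw [Prod.mk.injEq] at p1 p2
      have q1 : a.castSucc.val = b.succ.val := by rw [p1.2]
      have q2 : a.succ.val = b.castSucc.val := by rw [p2.2]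
      simp [Fin.val_succ] at q1 q2
      omega
  set F : (Fin k → Fin 13) → Set (Sym2 W) :=
    fun f => {e | ∃ i, ∃ a ∈ choices (f i), e = pe i a} with hF
  have memF : ∀ f i a, pe i a ∈ F f ↔ a ∈ choices (f i) := by
    intro f i a
    constructor
    · rintro ⟨j, b, hb, he⟩
      obtain ⟨rfl, rfl⟩ := pe_inj _ _ _ _ he
      exact hb
    · intro ha; exact ⟨i, a, ha, rfl⟩
  have hmatch : ∀ f, IsRMatching G 4 (F f) := by
    intro f
    constructor
    · rintro e ⟨i, a, ha, rfl⟩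
      exact (hedge i a)
    · rintro e ⟨i, a, ha, rfl⟩ e' ⟨j, b, hb, rfl⟩ hne
      by_cases hij : i = j
      · subst hij
        have hab : a ≠ b := fun h => hne (by rw [h])
        rcases choices_far (f i) a ha b hb hab with h | h
        · exact h1 i a b h
        · rw [edgeDist_comm]; exact h1 i b a h
      · exact h2 i j a b hij (choices_allowed _ a ha) (choices_allowed _ b hb)
  have Finj : Function.Injective
      (fun f : Fin k → Fin 13 => (⟨F f, hmatch f⟩ : {M : Set (Sym2 W) // IsRMatching G 4 M})) := by
    intro f g h
    rw [Subtype.mk.injEq] at h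
    funext i
    by_contra hfg
    have hc : choices (f i) ≠ choices (g i) := fun hh => hfg (choices_inj hh)
    obtain ⟨a, ha⟩ : ∃ a, ¬(a ∈ choices (f i) ↔ a ∈ choices (g i)) := by
      by_contra hall
      push_neg at hall
      exact hc (Finset.ext fun a => (hall a))
    rw [← memF f i a, ← memF g i a, h] at ha
    exact ha Iff.rfl
  calc 13 ^ k = Nat.card (Fin k → Fin 13) := by simp [Nat.card_fun]
    _ ≤ _ := Nat.card_le_card_of_injective _ Finj

lemma treeP9_adj {k : ℕ} (x y : Option (Fin k × Fin 9)) :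
    (treeP9 k).Adj x y ↔ x ≠ y ∧
      (((∃ (i : Fin k) (a : Fin 8), x = some (i, a.castSucc) ∧ y = some (i, a.succ)) ∨
        (x = none ∧ ∃ i : Fin k, y = some (i, 4))) ∨
       ((∃ (i : Fin k) (a : Fin 8), y = some (i, a.castSucc) ∧ x = some (i, a.succ)) ∨
        (y = none ∧ ∃ i : Fin k, x = some (i, 4)))) :=
  SimpleGraph.fromRel_adj _ x y

lemma treeP9_adj_path {k : ℕ} (i : Fin k) (x y : Fin 9) (h : x.val + 1 = y.val) :
    (treeP9 k).Adj (some (i, x)) (some (i, y)) := by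
  rw [treeP9_adj]
  refine ⟨by simp [Fin.ext_iff]; omega, Or.inl (Or.inl ⟨i, ⟨x.val, by omega⟩, ?_, ?_⟩)⟩
  · simp [Fin.ext_iff]
  · simp [Fin.ext_iff, Fin.val_succ]; omega

lemma treeP9_adj_hub {k : ℕ} (i : Fin k) :
    (treeP9 k).Adj none (some (i, 4)) := by
  rw [treeP9_adj]
  exact ⟨by simp, Or.inl (Or.inr ⟨rfl, i, rfl⟩)⟩

lemma treeP9_reach_center {k : ℕ} (i : Fin k) (x : Fin 9) :
    (treeP9 k).Reachable (some (i, x)) (some (i, (4 : Fin 9))) := by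
  have r : ∀ (x y : Fin 9), x.val + 1 = y.val →
      (treeP9 k).Reachable (some (i, x)) (some (i, y)) :=
    fun x y h => (treeP9_adj_path i x y h).reachable
  fin_cases x
  · exact ((r 0 1 rfl).trans ((r 1 2 rfl).trans ((r 2 3 rfl).trans (r 3 4 rfl))))
  · exact ((r 1 2 rfl).trans ((r 2 3 rfl).trans (r 3 4 rfl)))
  · exact ((r 2 3 rfl).trans (r 3 4 rfl))
  · exact r 3 4 rfl
  · exact Reachable.refl _
  · exact (r 4 5 rfl).symm
  · exact ((r 4 5 rfl).trans (r 5 6 rfl)).symm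
  · exact ((r 4 5 rfl).trans ((r 5 6 rfl).trans (r 6 7 rfl))).symm
  · exact ((r 4 5 rfl).trans ((r 5 6 rfl).trans ((r 6 7 rfl).trans (r 7 8 rfl)))).symm

lemma treeP9_preconn {k : ℕ} : (treeP9 k).Preconnected := by
  have toHub : ∀ u : Option (Fin k × Fin 9), (treeP9 k).Reachable u none := by
    rintro (_ | ⟨i, x⟩)
    · exact Reachable.refl _
    · exact (treeP9_reach_center i x).trans (treeP9_adj_hub i).reachable.symm
  intro u v
  exact (toHub u).trans (toHub v).symm

lemma treeP9_dist_same {k : ℕ} (i : Fin k) (x y : Fin 9) :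
    |(x.val : ℤ) - (y.val : ℤ)| ≤ ((treeP9 k).dist (some (i, x)) (some (i, y)) : ℤ) := by
  set φ : Option (Fin k × Fin 9) → ℤ :=
    fun w => w.elim 4 (fun p => if p.1 = i then (p.2.val : ℤ) else 4) with hφdef
  have hφ : ∀ a b, (treeP9 k).Adj a b → |φ a - φ b| ≤ 1 := by
    intro a b hadj
    rw [treeP9_adj] at hadj
    obtain ⟨-, (⟨j, c, rfl, rfl⟩ | ⟨rfl, j, rfl⟩) | (⟨j, c, rfl, rfl⟩ | ⟨rfl, j, rfl⟩)⟩ := hadj <;>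
      simp only [hφdef, Option.elim_some, Option.elim_none, Fin.val_succ, Fin.coe_castSucc] <;>
      rw [abs_le] <;> constructor <;> split_ifs <;> omega
  have := phi_dist φ hφ (treeP9_preconn (some (i, x)) (some (i, y)))
  simpa [hφdef] using this

lemma treeP9_dist_diff {k : ℕ} (i j : Fin k) (hij : i ≠ j) (x y : Fin 9)
    (hx : x.val ≠ 4) (hy : y.val ≠ 4) :
    4 ≤ (treeP9 k).dist (some (i, x)) (some (j, y)) := by
  set d9 : Fin 9 → ℤ := fun z => if z.val ≤ 4 then 4 - z.val else z.val - 4 with hd9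
  set φ : Option (Fin k × Fin 9) → ℤ :=
    fun w => w.elim 0 (fun p => if p.1 = i then d9 p.2 + 1
      else if p.1 = j then -(d9 p.2 + 1) else 0) with hφdef
  have hφ : ∀ a b, (treeP9 k).Adj a b → |φ a - φ b| ≤ 1 := by
    intro a b hadj
    rw [treeP9_adj] at hadj
    obtain ⟨-, (⟨l, c, rfl, rfl⟩ | ⟨rfl, l, rfl⟩) | (⟨l, c, rfl, rfl⟩ | ⟨rfl, l, rfl⟩)⟩ := hadj <;>
      simp only [hφdef, hd9, Option.elim_some, Option.elim_none, Fin.val_succ,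
        Fin.coe_castSucc] <;>
      rw [abs_le] <;> constructor <;> split_ifs <;> omega
  have hb := phi_dist φ hφ (treeP9_preconn (some (i, x)) (some (j, y)))
  have h1 : φ (some (i, x)) = d9 x + 1 := by simp [hφdef]
  have h2 : φ (some (j, y)) = -(d9 y + 1) := by simp [hφdef, hij.symm, Ne.symm hij]
  have hx1 : 1 ≤ d9 x := by simp only [hd9]; split_ifs <;> omega
  have hy1 : 1 ≤ d9 y := by simp only [hd9]; split_ifs <;> omega
  rw [h1, h2] at hb
  have : (4 : ℤ) ≤ ((treeP9 k).dist (some (i, x)) (some (j, y)) : ℤ) := by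
    have := abs_le.mp (le_refl |d9 x + 1 - -(d9 y + 1)|)
    have habs : d9 x + 1 - -(d9 y + 1) ≤ |d9 x + 1 - -(d9 y + 1)| := le_abs_self _
    linarith
  exact_mod_cast this

lemma treeP9_dist_ge4 {k : ℕ} (i : Fin k) (x y : Fin 9) (h : x.val + 4 ≤ y.val) :
    4 ≤ (treeP9 k).dist (some (i, x)) (some (i, y)) := by
  have hd := treeP9_dist_same i x y
  have h2 : (y.val : ℤ) - (x.val : ℤ) ≤ |(x.val : ℤ) - y.val| := by
    rw [abs_sub_comm]; exact le_abs_self _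
  have : (4 : ℤ) ≤ ((treeP9 k).dist (some (i, x)) (some (i, y)) : ℤ) := by
    have h1 : (4 : ℤ) ≤ (y.val : ℤ) - x.val := by omega
    linarith
  exact_mod_cast this

lemma part1 (k : ℕ) : 13 ^ k ≤ Nat.card {M : Set (Sym2 (Option (Fin k × Fin 9))) //
    IsRMatching (treeP9 k) 4 M} := by
  apply count_ge (treeP9 k) k (fun p => some p)
  · exact fun a b h => by injection h
  · intro i a
    exact treeP9_adj_path i a.castSucc a.succ (by simp [Fin.val_succ])
  · intro i a b hab
    apply edgeDist_ge
    intro u hu v hv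
    rw [Sym2.mem_iff] at hu hv
    rcases hu with rfl | rfl <;> rcases hv with rfl | rfl <;>
      apply treeP9_dist_ge4 <;> simp [Fin.val_succ, Fin.coe_castSucc] <;> omega
  · intro i j a b hij ha hb
    apply edgeDist_ge
    intro u hu v hv
    rw [Sym2.mem_iff] at hu hv
    rcases hu with rfl | rfl <;> rcases hv with rfl | rfl <;>
      apply treeP9_dist_diff i j hij <;> simp [Fin.val_succ, Fin.coe_castSucc] <;> omega

def pnat (k v : ℕ) : ℕ :=
  if v = 0 then 0
  else if v ≤ 9 * k then
    (if (v - 1) % 9 < 4 then v + 1 else if (v - 1) % 9 = 4 then 0 else v - 1)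
  else if v = 9 * k + 1 then 0 else v - 1

def dnat (k v : ℕ) : ℕ :=
  if v = 0 then 0
  else if v ≤ 9 * k then (if (v - 1) % 9 ≤ 4 then 5 - (v - 1) % 9 else (v - 1) % 9 - 3)
  else v - 9 * k

def finTree (k n : ℕ) : SimpleGraph (Fin n) :=
  SimpleGraph.fromRel (fun x y => pnat k x.val = y.val)

lemma dnat_zero_iff (k v : ℕ) : dnat k v = 0 ↔ v = 0 := by
  unfold dnat; split_ifs <;> omega

lemma dnat_pnat_lt (k : ℕ) {v : ℕ} (h : v ≠ 0) : dnat k (pnat k v) < dnat k v := by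
  unfold pnat
  split_ifs with h1 h2 h3 h4 h5 <;> unfold dnat <;> split_ifs <;> omega

lemma pnat_zero (k : ℕ) : pnat k 0 = 0 := by unfold pnat; simp

lemma dnat_pnat_le (k v : ℕ) : dnat k (pnat k v) ≤ dnat k v := by
  by_cases h : v = 0
  · subst h; rw [pnat_zero]
  · exact (dnat_pnat_lt k h).le

lemma dnat_iter (k m v : ℕ) : dnat k ((pnat k)^[m] v) ≤ dnat k v := by
  induction m generalizing v with
  | zero => exact le_rfl
  | succ m ih =>
    rw [Function.iterate_succ_apply]
    exact (ih (pnat k v)).trans (dnat_pnat_le k v)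

lemma no_return (k : ℕ) {v : ℕ} (h : v ≠ 0) : ∀ m, (pnat k)^[m] (pnat k v) ≠ v := by
  intro m he
  have h1 := dnat_iter k m (pnat k v)
  have h2 := dnat_pnat_lt (k := k) h
  rw [he] at h1
  omega

lemma pnat_lt_n {k n : ℕ} (hkn : 9 * k < n) {v : ℕ} (hv : v < n) : pnat k v < n := by
  unfold pnat; split_ifs <;> omega

lemma finTree_adj {k n : ℕ} (x y : Fin n) : (finTree k n).Adj x y ↔
    x ≠ y ∧ (pnat k x.val = y.val ∨ pnat k y.val = x.val) :=
  SimpleGraph.fromRel_adj _ x y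

lemma finTree_preconn {k n : ℕ} (hkn : 9 * k < n) : (finTree k n).Preconnected := by
  have hn : 0 < n := by omega
  have key : ∀ (d : ℕ) (x : Fin n), dnat k x.val ≤ d → (finTree k n).Reachable x ⟨0, hn⟩ := by
    intro d
    induction d with
    | zero =>
      intro x hx
      have h0 : x.val = 0 := (dnat_zero_iff k x.val).mp (Nat.le_zero.mp hx)
      have : x = ⟨0, hn⟩ := Fin.ext h0
      rw [this]
    | succ d ih =>
      intro x hx
      by_cases h0 : x.val = 0
      · have : x = ⟨0, hn⟩ := Fin.ext h0
        rw [this]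
      · set y : Fin n := ⟨pnat k x.val, pnat_lt_n hkn x.isLt⟩ with hy
        have hadj : (finTree k n).Adj x y := by
          rw [finTree_adj]
          refine ⟨fun he => ?_, Or.inl rfl⟩
          · have h1 := dnat_pnat_lt (k := k) h0
            have h2 : pnat k x.val = x.val := (congrArg Fin.val he).symm
            rw [h2] at h1
            exact lt_irrefl _ h1
        refine hadj.reachable.trans (ih y ?_)
        have := dnat_pnat_lt (k := k) h0
        simp only [hy]
        omega
  intro u v
  exact (key _ u le_rfl).trans (key _ v le_rfl).symm

lemma desc_step (f : ℕ → ℕ) (x t : ℕ) :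
    (∃ m, f^[m] x = t) ↔ (x = t ∨ ∃ m, f^[m] (f x) = t) := by
  constructor
  · rintro ⟨m, hm⟩
    cases m with
    | zero => exact Or.inl hm
    | succ m => exact Or.inr ⟨m, by rwa [Function.iterate_succ_apply] at hm⟩
  · rintro (rfl | ⟨m, hm⟩)
    · exact ⟨0, rfl⟩
    · exact ⟨m + 1, by rwa [Function.iterate_succ_apply]⟩

lemma finTree_isBridge {k n : ℕ} {v w : Fin n} (hvw : v ≠ w) (hp : pnat k v.val = w.val) :
    (finTree k n).IsBridge s(v, w) := by
  have hadj : (finTree k n).Adj v w := (finTree_adj v w).mpr ⟨hvw, Or.inl hp⟩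
  rw [SimpleGraph.isBridge_iff_adj_and_forall_walk_mem_edges]
  intro p
  by_contra hep
  have hv0 : v.val ≠ 0 := by
    intro h0
    have hz : pnat k v.val = 0 := by rw [h0, pnat_zero]
    exact hvw (Fin.ext (by omega))
  set D : Fin n → Prop := fun x => ∃ m, (pnat k)^[m] x.val = v.val with hD
  have oneStep : ∀ a b : Fin n, pnat k a.val = b.val → s(a, b) ≠ s(v, w) → (D a ↔ D b) := by
    intro a b hab hne
    have hav : a.val ≠ v.val := by
      intro he
      apply hne
      have hav' : a = v := Fin.ext he
      subst hav'
      have hbw : b = w := Fin.ext (by omega)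
      rw [hbw]
    simp only [hD]
    rw [desc_step (pnat k) a.val v.val, hab]
    constructor
    · rintro (he | h)
      · exact absurd he hav
      · exact h
    · exact Or.inr
  have inv : ∀ {a b : Fin n} (q : (finTree k n).Walk a b), s(v, w) ∉ q.edges → (D a ↔ D b) := by
    intro a b q
    induction q with
    | nil => intro _; rfl
    | cons h q ih =>
      intro hq
      rw [SimpleGraph.Walk.edges_cons, List.mem_cons] at hq
      push_neg at hq
      rename_i x y z
      obtain ⟨hne', hor⟩ := (finTree_adj _ _).mp h
      have step : D x ↔ D y := by
        rcases hor with h1 | h1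
        · exact oneStep _ _ h1 (fun he => hq.1 he.symm)
        · refine (oneStep _ _ h1 (fun he => hq.1 ?_)).symm
          rw [← he, Sym2.eq_swap]
      exact step.trans (ih hq.2)
  have hDv : D v := ⟨0, rfl⟩
  have hDw : ¬ D w := by
    rintro ⟨m, hm⟩
    rw [← hp] at hm
    exact no_return k hv0 m hm
  exact hDw ((inv p hep).mp hDv)

lemma finTree_acyclic (k n : ℕ) : (finTree k n).IsAcyclic := by
  rw [SimpleGraph.isAcyclic_iff_forall_adj_isBridge]
  intro v w h
  obtain ⟨hne, hor⟩ := (finTree_adj v w).mp h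
  rcases hor with h1 | h1
  · exact finTree_isBridge hne h1
  · have hb := finTree_isBridge (Ne.symm hne) h1
    rwa [Sym2.eq_swap] at hb

def phiA (k i v : ℕ) : ℤ :=
  if 1 ≤ v ∧ v ≤ 9 * k ∧ (v - 1) / 9 = i then ((v - 1) % 9 : ℤ) else 4

def dd9 (v : ℕ) : ℕ := if (v - 1) % 9 ≤ 4 then 4 - (v - 1) % 9 else (v - 1) % 9 - 4

def phiD (k i j v : ℕ) : ℤ :=
  if 1 ≤ v ∧ v ≤ 9 * k ∧ (v - 1) / 9 = i then (dd9 v : ℤ) + 1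
  else if 1 ≤ v ∧ v ≤ 9 * k ∧ (v - 1) / 9 = j then -((dd9 v : ℤ) + 1)
  else 0

lemma phiA_step (k i : ℕ) {a b : ℕ} (h : pnat k a = b) :
    |phiA k i a - phiA k i b| ≤ 1 := by
  unfold pnat at h
  unfold phiA
  rw [abs_le]
  split_ifs at h <;> constructor <;> split_ifs <;> omega

set_option maxHeartbeats 2000000 in
lemma phiD_step (k i j : ℕ) {a b : ℕ} (h : pnat k a = b) :
    |phiD k i j a - phiD k i j b| ≤ 1 := by
  unfold pnat at h
  unfold phiD dd9
  rw [abs_le]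
  split_ifs at h <;> constructor <;> split_ifs <;> omega

def vemb {k n : ℕ} (hkn : 9 * k < n) (p : Fin k × Fin 9) : Fin n :=
  ⟨9 * p.1.val + 1 + p.2.val, by have := p.1.isLt; have := p.2.isLt; omega⟩

lemma vemb_val {k n : ℕ} (hkn : 9 * k < n) (p : Fin k × Fin 9) :
    (vemb hkn p).val = 9 * p.1.val + 1 + p.2.val := rfl

lemma phiA_adj {k n : ℕ} (i : ℕ) (a b : Fin n) (h : (finTree k n).Adj a b) :
    |phiA k i a.val - phiA k i b.val| ≤ 1 := by
  obtain ⟨-, h1 | h1⟩ := (finTree_adj a b).mp h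
  · exact phiA_step k i h1
  · rw [abs_sub_comm]; exact phiA_step k i h1

lemma phiD_adj {k n : ℕ} (i j : ℕ) (a b : Fin n) (h : (finTree k n).Adj a b) :
    |phiD k i j a.val - phiD k i j b.val| ≤ 1 := by
  obtain ⟨-, h1 | h1⟩ := (finTree_adj a b).mp h
  · exact phiD_step k i j h1
  · rw [abs_sub_comm]; exact phiD_step k i j h1

lemma phiA_val (k i x : ℕ) (hi : i < k) (hx : x < 9) :
    phiA k i (9 * i + 1 + x) = (x : ℤ) := by
  unfold phiA
  split_ifs <;> omega

lemma phiD_val_i (k i j x : ℕ) (hi : i < k) (hx : x < 9) (hne : x ≠ 4) :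
    2 ≤ phiD k i j (9 * i + 1 + x) := by
  unfold phiD dd9
  split_ifs <;> omega

lemma phiD_val_j (k i j y : ℕ) (hj : j < k) (hy : y < 9) (hne : y ≠ 4) (hij : i ≠ j) :
    phiD k i j (9 * j + 1 + y) ≤ -2 := by
  unfold phiD dd9
  split_ifs <;> omega

lemma finTree_dist_same {k n : ℕ} (hkn : 9 * k < n) (i : Fin k) (x y : Fin 9) :
    |(x.val : ℤ) - (y.val : ℤ)| ≤
      ((finTree k n).dist (vemb hkn (i, x)) (vemb hkn (i, y)) : ℤ) := by
  have hb : |phiA k i.val (vemb hkn (i, x)).val - phiA k i.val (vemb hkn (i, y)).val| ≤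
      ((finTree k n).dist (vemb hkn (i, x)) (vemb hkn (i, y)) : ℤ) :=
    phi_dist (fun w : Fin n => phiA k i.val w.val) (phiA_adj i.val)
      (finTree_preconn hkn (vemb hkn (i, x)) (vemb hkn (i, y)))
  rwa [vemb_val, vemb_val, phiA_val k i.val x.val i.isLt x.isLt,
    phiA_val k i.val y.val i.isLt y.isLt] at hb

lemma finTree_dist_ge4 {k n : ℕ} (hkn : 9 * k < n) (i : Fin k) (x y : Fin 9)
    (h : x.val + 4 ≤ y.val) :
    4 ≤ (finTree k n).dist (vemb hkn (i, x)) (vemb hkn (i, y)) := by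
  have hd := finTree_dist_same hkn i x y
  have h2 : (y.val : ℤ) - (x.val : ℤ) ≤ |(x.val : ℤ) - y.val| := by
    rw [abs_sub_comm]; exact le_abs_self _
  have : (4 : ℤ) ≤ ((finTree k n).dist (vemb hkn (i, x)) (vemb hkn (i, y)) : ℤ) := by
    have h1 : (4 : ℤ) ≤ (y.val : ℤ) - x.val := by omega
    linarith
  exact_mod_cast this

lemma finTree_dist_diff {k n : ℕ} (hkn : 9 * k < n) (i j : Fin k) (hij : i ≠ j)
    (x y : Fin 9) (hx : x.val ≠ 4) (hy : y.val ≠ 4) :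
    4 ≤ (finTree k n).dist (vemb hkn (i, x)) (vemb hkn (j, y)) := by
  have hb : |phiD k i.val j.val (vemb hkn (i, x)).val -
      phiD k i.val j.val (vemb hkn (j, y)).val| ≤
      ((finTree k n).dist (vemb hkn (i, x)) (vemb hkn (j, y)) : ℤ) :=
    phi_dist (fun w : Fin n => phiD k i.val j.val w.val) (phiD_adj i.val j.val)
      (finTree_preconn hkn (vemb hkn (i, x)) (vemb hkn (j, y)))
  have hijv : i.val ≠ j.val := fun h => hij (Fin.ext h)
  have e1 : 2 ≤ phiD k i.val j.val (vemb hkn (i, x)).val := by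
    rw [vemb_val]; exact phiD_val_i k i.val j.val x.val i.isLt x.isLt hx
  have e2 : phiD k i.val j.val (vemb hkn (j, y)).val ≤ -2 := by
    rw [vemb_val]; exact phiD_val_j k i.val j.val y.val j.isLt y.isLt hy hijv
  have habs := le_abs_self (phiD k i.val j.val (vemb hkn (i, x)).val -
    phiD k i.val j.val (vemb hkn (j, y)).val)
  have : (4 : ℤ) ≤ ((finTree k n).dist (vemb hkn (i, x)) (vemb hkn (j, y)) : ℤ) := by
    linarith
  exact_mod_cast this

lemma pnat_edge (k i a : ℕ) (hi : i < k) (ha : a < 8) :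
    pnat k (9 * i + 1 + a) = 9 * i + 1 + a + 1 ∨ pnat k (9 * i + 1 + a + 1) = 9 * i + 1 + a := by
  unfold pnat
  split_ifs <;>
    first | exact absurd rfl (by omega) | exact (by assumption : False).elim | omega

lemma part2_count {k n : ℕ} (hkn : 9 * k < n) :
    13 ^ k ≤ Nat.card {M : Set (Sym2 (Fin n)) // IsRMatching (finTree k n) 4 M} := by
  apply count_ge (finTree k n) k (vemb hkn)
  · intro p q h
    have hv : (vemb hkn p).val = (vemb hkn q).val := by rw [h]
    rw [vemb_val, vemb_val] at hv
    have h1 := p.1.isLt; have h2 := p.2.isLt; have h3 := q.1.isLt; have h4 := q.2.isLt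
    have : p.1 = q.1 ∧ p.2 = q.2 := ⟨Fin.ext (by omega), Fin.ext (by omega)⟩
    exact Prod.ext this.1 this.2
  · intro i a
    rw [finTree_adj]
    constructor
    · intro he
      have hv : (vemb hkn (i, a.castSucc)).val = (vemb hkn (i, a.succ)).val := by rw [he]
      rw [vemb_val, vemb_val] at hv
      simp [Fin.val_succ, Fin.coe_castSucc] at hv
    · have h0 := pnat_edge k i.val a.val i.isLt a.isLt
      rw [vemb_val, vemb_val]
      simp only [Fin.val_succ, Fin.coe_castSucc]
      have e1 : 9 * i.val + 1 + (a.val + 1) = 9 * i.val + 1 + a.val + 1 := by omega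
      rw [e1]
      exact h0
  · intro i a b hab
    apply edgeDist_ge
    intro u hu v hv
    rw [Sym2.mem_iff] at hu hv
    rcases hu with rfl | rfl <;> rcases hv with rfl | rfl <;>
      apply finTree_dist_ge4 hkn <;> simp [Fin.val_succ, Fin.coe_castSucc] <;> omega
  · intro i j a b hij ha hb
    apply edgeDist_ge
    intro u hu v hv
    rw [Sym2.mem_iff] at hu hv
    rcases hu with rfl | rfl <;> rcases hv with rfl | rfl <;>
      apply finTree_dist_diff hkn i j hij <;> simp [Fin.val_succ, Fin.coe_castSucc] <;> omega

theorem stmt_11 :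
    (∀ k : ℕ, 0 < k →
      13 ^ k ≤ Nat.card {M : Set (Sym2 (Option (Fin k × Fin 9))) //
        IsRMatching (treeP9 k) 4 M}) ∧
    ∃ c : ℝ, 0 < c ∧ ∀ n : ℕ, 1 ≤ n → ∃ T : SimpleGraph (Fin n),
      T.Connected ∧ T.IsAcyclic ∧
      c * (13 : ℝ) ^ ((n : ℝ) / 9) ≤
        Nat.card {M : Set (Sym2 (Fin n)) // IsRMatching T 4 M} := by
  constructor
  · intro k _
    exact part1 k
  · refine ⟨1/169, by norm_num, ?_⟩
    intro n hn
    set k := (n - 1) / 9 with hk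
    have hkn : 9 * k < n := by omega
    haveI : Nonempty (Fin n) := ⟨⟨0, by omega⟩⟩
    refine ⟨finTree k n, ⟨finTree_preconn hkn⟩, finTree_acyclic k n, ?_⟩
    have hcard := part2_count (n := n) hkn
    have h1 : ((13 : ℝ)) ^ ((n : ℝ) / 9) ≤ (13 : ℝ) ^ ((k : ℝ) + 2) := by
      apply Real.rpow_le_rpow_of_exponent_le (by norm_num)
      have hle : n ≤ 9 * k + 18 := by omega
      rw [div_le_iff₀ (by norm_num : (0 : ℝ) < 9)]
      have : (n : ℝ) ≤ (9 * k + 18 : ℕ) := by exact_mod_cast hle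
      push_cast at this ⊢
      linarith
    have h2 : (13 : ℝ) ^ ((k : ℝ) + 2) = (13 : ℝ) ^ (k + 2 : ℕ) := by
      rw [← Real.rpow_natCast 13 (k + 2)]
      push_cast
      ring_nf
    calc (1 / 169 : ℝ) * 13 ^ ((n : ℝ) / 9)
        ≤ (1 / 169) * 13 ^ ((k : ℝ) + 2) := by
          apply mul_le_mul_of_nonneg_left h1 (by norm_num)
      _ = 13 ^ k := by rw [h2, pow_add]; norm_num; ring
      _ ≤ Nat.card {M : Set (Sym2 (Fin n)) // IsRMatching (finTree k n) 4 M} := by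
          exact_mod_cast hcard
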